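/- In an e-ring, for every g ∈ G we have g² ∈ E⁺, and for all g,h ∈ G, gh + hg ∈ G. -/
import Mathlib


/-- An e-ring: an associative unital ring `R` together with a set `E` of effects.
`E⁺` is the additive submonoid generated by `E` (the set of finite sums of effects). -/
structure ERing (R : Type*) [Ring R] where
  E : Set R
  zero_mem : (0:R) ∈ E
  one_mem : (1:R) ∈ E
  compl_mem : ∀ e ∈ E, 1 - e ∈ E
  ax_i : ∀ a ∈ AddSubmonoid.closure E, -a ∈ AddSubmonoid.closure E → a = 0
  ax_ii : ∀ a ∈ AddSubmonoid.closure E, 1 - a ∈ AddSubmonoid.closure E → a ∈ E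
  ax_iii : ∀ a ∈ AddSubmonoid.closure E, ∀ b ∈ AddSubmonoid.closure E,
    a * b = b * a → a * b ∈ AddSubmonoid.closure E
  ax_iv : ∀ a ∈ AddSubmonoid.closure E, ∀ b ∈ AddSubmonoid.closure E,
    a * b * a ∈ AddSubmonoid.closure E
  ax_v : ∀ a ∈ AddSubmonoid.closure E, ∀ b ∈ AddSubmonoid.closure E,
    a * b * a = 0 → a * b = 0 ∧ b * a = 0
  ax_vi : ∀ a ∈ AddSubmonoid.closure E, ∀ b ∈ AddSubmonoid.closure E,
    (a - b) * (a - b) ∈ AddSubmonoid.closure E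

namespace ERing

variable {R : Type*} [Ring R]

/-- The positive cone `E⁺`: all finite sums of effects. -/
def Ep (S : ERing R) : Set R := (AddSubmonoid.closure S.E : Set R)

/-- The directed group `G = E⁺ − E⁺` (as a subset of `R`). -/
def G (S : ERing R) : Set R := {x | ∃ a ∈ S.Ep, ∃ b ∈ S.Ep, x = a - b}

/-- The partial order with positive cone `E⁺`: `g ≤ h` iff `h − g ∈ E⁺`. -/
def le (S : ERing R) (g h : R) : Prop := h - g ∈ S.Ep

/-- The set of projections: idempotent elements of `G`. -/
def P (S : ERing R) : Set R := {p | p ∈ S.G ∧ p * p = p}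

end ERing

theorem stmt1 {R : Type*} [Ring R] (S : ERing R) :
    (∀ g ∈ S.G, g * g ∈ S.Ep) ∧
    (∀ g ∈ S.G, ∀ h ∈ S.G, g * h + h * g ∈ S.G) := by
  
  have hsq : ∀ g ∈ S.G, g * g ∈ S.Ep := by
    rintro g ⟨a, ha, b, hb, rfl⟩
    exact S.ax_vi a ha b hb
  refine ⟨hsq, ?_⟩
  rintro g hg h hh
  have hgh : g + h ∈ S.G := by
    obtain ⟨a, ha, b, hb, rfl⟩ := hg
    obtain ⟨c, hc, d, hd, rfl⟩ := hh
    exact ⟨a + c, add_mem ha hc, b + d, add_mem hb hd, by noncomm_ring⟩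
  refine ⟨(g + h) * (g + h), hsq _ hgh, g * g + h * h,
    add_mem (hsq g hg) (hsq h hh), by noncomm_ring⟩
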